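/- A filiform real Lie algebra of even dimension carries no complex structure: let g be a real nilpotent Lie algebra of dimension 2n with n ≥ 2 which is filiform, i.e. whose lower central series satisfies C^{2n-1}(g) = {0} and C^{2n-2}(g) ≠ {0} (nilindex 2n−1). Then there is no linear map J : g → g satisfying J² = −Id and the integrability (Nijenhuis) condition ⁅J(X),J(Y)⁆ = ⁅X,Y⁆ + J(⁅J(X),Y⁆ + ⁅X,J(Y)⁆) for all X, Y ∈ g. -/

import Mathlib

open Module

/-- **A filiform real Lie algebra of even dimension carries no complex structure.**
Let `g` be a real nilpotent Lie algebra of dimension `2n` (`n ≥ 2`) which is filiform, i.e.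
its lower central series satisfies `C^{2n-1}(g) = 0` and `C^{2n-2}(g) ≠ 0`.  Then there is no
linear map `J : g → g` with `J² = −Id` satisfying the Nijenhuis integrability condition
`⁅J X, J Y⁆ = ⁅X,Y⁆ + J (⁅J X, Y⁆ + ⁅X, J Y⁆)`. -/
theorem filiform_even_dim_has_no_complex_structure
    (L : Type) [LieRing L] [LieAlgebra ℝ L] [FiniteDimensional ℝ L]
    (n : ℕ) (hn : 2 ≤ n)
    (hdim : Module.finrank ℝ L = 2 * n)
    (hfil₁ : LieModule.lowerCentralSeries ℝ L L (2 * n - 1) = ⊥)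
    (hfil₂ : LieModule.lowerCentralSeries ℝ L L (2 * n - 2) ≠ ⊥) :
    ¬ ∃ J : L →ₗ[ℝ] L,
        (∀ X : L, J (J X) = -X) ∧
        (∀ X Y : L, ⁅J X, J Y⁆ = ⁅X, Y⁆ + J (⁅J X, Y⁆ + ⁅X, J Y⁆)) := by
  classical
  rintro ⟨J, hJ2, hInt⟩
  set m := 2 * n with hmdef
  have hm4 : 4 ≤ m := by omega
  set C : ℕ → LieSubmodule ℝ L L := LieModule.lowerCentralSeries ℝ L L with hC
  -- successor formula
  have hsucc : ∀ k, C (k + 1) = ⁅(⊤ : LieIdeal ℝ L), C k⁆ := by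
    intro k
    exact LieModule.lowerCentralSeries_succ ℝ L L k
  have hC0 : C 0 = ⊤ := rfl
  -- brackets drop one step in the series
  have hmem_succ : ∀ (k : ℕ) (x y : L), y ∈ C k → ⁅x, y⁆ ∈ C (k + 1) := by
    intro k x y hy
    rw [hsucc k]
    exact LieSubmodule.lie_mem_lie (LieSubmodule.mem_top x) hy
  have hC1mem : ∀ x y : L, ⁅x, y⁆ ∈ C 1 := fun x y =>
    hmem_succ 0 x y (LieSubmodule.mem_top y)
  -- stabilization of the series
  have hstab : ∀ k, C (k + 1) = C k → ∀ l, k ≤ l → C l = C k := by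
    intro k hk l hl
    induction l, hl using Nat.le_induction with
    | base => rfl
    | succ l hl ih =>
      rw [hsucc l, ih, ← hsucc k, hk]
  -- strictness of the series
  have hne : ∀ k, k + 2 ≤ m → C (k + 1) ≠ C k := by
    intro k hk h
    have h2 := hstab k h (m - 2) (by omega)
    have h3 := hstab k h (m - 1) (by omega)
    exact hfil₂ (h2.trans (h3.symm.trans hfil₁))
  have hanti : ∀ {k l : ℕ}, k ≤ l → C l ≤ C k := by
    intro k l h
    exact LieModule.antitone_lowerCentralSeries ℝ L L h
  have hlt : ∀ k, k + 2 ≤ m → C (k + 1) < C k := fun k hk =>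
    lt_of_le_of_ne (hanti (Nat.le_succ k)) (hne k hk)
  -- submodule-level strictness
  have hltS : ∀ k, k + 2 ≤ m →
      ((LieSubmodule.toSubmodule (C (k + 1))) < (LieSubmodule.toSubmodule (C k))) := by
    intro k hk
    refine lt_of_le_of_ne ?_ ?_
    · exact (LieSubmodule.toSubmodule_le_toSubmodule _ _).mpr (hlt k hk).le
    · intro h
      exact hne k hk ((LieSubmodule.toSubmodule_inj _ _).mp h)
  -- dimensions
  have hfr_lt : ∀ k, k + 2 ≤ m →
      finrank ℝ ((LieSubmodule.toSubmodule (C (k + 1)))) < finrank ℝ ((LieSubmodule.toSubmodule (C k))) := by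
    intro k hk
    exact Submodule.finrank_lt_finrank_of_lt (hltS k hk)
  -- upper bound first for k = 1
  have hfr1 : finrank ℝ ((LieSubmodule.toSubmodule (C 1))) ≤ m - 2 := by
    by_contra hcon
    push_neg at hcon
    have hle : finrank ℝ ((LieSubmodule.toSubmodule (C 1))) ≤ m := by
      rw [← hdim]; exact Submodule.finrank_le _
    -- either finrank = m or m - 1
    rcases eq_or_lt_of_le hle with heq | hlt'
    · -- C 1 = ⊤
      have : (LieSubmodule.toSubmodule (C 1)) = ⊤ := Submodule.eq_top_of_finrank_eq (by rw [heq, hdim])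
      have h1 : C 1 = ⊤ := (LieSubmodule.toSubmodule_eq_top _).mp this
      exact hne 0 (by omega) (h1.trans hC0.symm)
    · -- finrank C 1 = m - 1
      have hfr : finrank ℝ ((LieSubmodule.toSubmodule (C 1))) = m - 1 := by omega
      have hne_top : (LieSubmodule.toSubmodule (C 1)) ≠ ⊤ := by
        intro h
        rw [h, finrank_top, hdim] at hfr
        omega
      obtain ⟨x₀, hx₀⟩ : ∃ x₀ : L, x₀ ∉ C 1 := by
        by_contra hall
        push_neg at hall
        apply hne_top
        rw [Submodule.eq_top_iff']
        intro x
        exact (LieSubmodule.mem_toSubmodule _).mpr (hall x)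
      have hx₀0 : x₀ ≠ 0 := fun h => hx₀ (h ▸ (C 1).zero_mem)
      -- span x₀ ⊔ C 1 = ⊤
      have hinf : Submodule.span ℝ {x₀} ⊓ (LieSubmodule.toSubmodule (C 1)) = ⊥ := by
        rw [Submodule.eq_bot_iff]
        rintro z ⟨hz1, hz2⟩
        obtain ⟨c, rfl⟩ := Submodule.mem_span_singleton.mp hz1
        rcases eq_or_ne c 0 with rfl | hc
        · simp
        · exfalso
          apply hx₀
          have : c⁻¹ • (c • x₀) ∈ C 1 := (C 1).smul_mem _ ((LieSubmodule.mem_toSubmodule _).mp hz2)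
          rwa [smul_smul, inv_mul_cancel₀ hc, one_smul] at this
      have hsupfr : finrank ℝ (Submodule.span ℝ {x₀} ⊔ (LieSubmodule.toSubmodule (C 1)) : Submodule ℝ L) = m := by
        have h := Submodule.finrank_sup_add_finrank_inf_eq (Submodule.span ℝ {x₀}) (LieSubmodule.toSubmodule (C 1))
        rw [hinf, finrank_bot, finrank_span_singleton hx₀0, hfr] at h
        omega
      have hsup : Submodule.span ℝ {x₀} ⊔ (LieSubmodule.toSubmodule (C 1)) = ⊤ :=
        Submodule.eq_top_of_finrank_eq (by rw [hsupfr, hdim])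
      have hdecomp : ∀ a : L, ∃ s : ℝ, ∃ u : L, u ∈ C 1 ∧ a = s • x₀ + u := by
        intro a
        have : a ∈ Submodule.span ℝ {x₀} ⊔ (LieSubmodule.toSubmodule (C 1)) := by
          rw [hsup]; trivial
        obtain ⟨v, hv, w, hw, hvw⟩ := Submodule.mem_sup.mp this
        obtain ⟨s, rfl⟩ := Submodule.mem_span_singleton.mp hv
        exact ⟨s, w, (LieSubmodule.mem_toSubmodule _).mp hw, hvw.symm⟩
      -- C 1 ≤ C 2
      have h12 : C 1 ≤ C 2 := by
        have : (C 1 : LieSubmodule ℝ L L) = ⁅(⊤ : LieIdeal ℝ L), C 0⁆ := hsucc 0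
        rw [this]
        rw [LieSubmodule.lie_le_iff]
        intro x _ y _
        obtain ⟨s, u, hu, rfl⟩ := hdecomp x
        obtain ⟨t, v, hv, rfl⟩ := hdecomp y
        have expand : ⁅s • x₀ + u, t • x₀ + v⁆
            = (s * t) • ⁅x₀, x₀⁆ + s • ⁅x₀, v⁆ + t • ⁅u, x₀⁆ + ⁅u, v⁆ := by
          simp only [lie_add, add_lie, lie_smul, smul_lie]
          module
        rw [expand, lie_self, smul_zero]
        refine (C 2).add_mem (((C 2).add_mem ((C 2).add_mem (zero_mem _) ?_) ?_)) ?_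
        · exact (C 2).smul_mem _ (hmem_succ 1 x₀ v hv)
        · refine (C 2).smul_mem _ ?_
          rw [← lie_skew]
          exact (C 2).neg_mem (hmem_succ 1 x₀ u hu)
        · exact hmem_succ 1 u v hv
      have h21 : C 2 = C 1 := le_antisymm (hanti (by omega)) h12
      exact hne 1 (by omega) h21
  -- lower bounds
  have hfr_ge : ∀ i, i ≤ m - 3 → i + 1 ≤ finrank ℝ ((LieSubmodule.toSubmodule (C (m - 2 - i)))) := by
    intro i
    induction i with
    | zero =>
      intro _
      have hne_bot : (LieSubmodule.toSubmodule (C (m - 2))) ≠ ⊥ := by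
        intro h
        exact hfil₂ ((LieSubmodule.toSubmodule_eq_bot _).mp h)
      have hnt : Nontrivial ((LieSubmodule.toSubmodule (C (m - 2)))) :=
        Submodule.nontrivial_iff_ne_bot.mpr hne_bot
      have hpos : 0 < finrank ℝ ((LieSubmodule.toSubmodule (C (m - 2)))) :=
        Module.finrank_pos_iff.mpr hnt
      exact hpos
    | succ i ih =>
      intro hi
      have h1 : i ≤ m - 3 := by omega
      have h2 := ih h1
      have hstep : finrank ℝ ((LieSubmodule.toSubmodule (C (m - 2 - i))))
          < finrank ℝ ((LieSubmodule.toSubmodule (C (m - 2 - (i + 1))))) := by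
        have : m - 2 - (i + 1) + 1 = m - 2 - i := by omega
        have h3 := hfr_lt (m - 2 - (i + 1)) (by omega)
        rwa [this] at h3
      omega
  -- exact dimensions
  have hfr : ∀ k, 1 ≤ k → k ≤ m - 1 → finrank ℝ ((LieSubmodule.toSubmodule (C k))) = m - 1 - k := by
    have hub : ∀ k, 1 ≤ k → k ≤ m - 1 → finrank ℝ ((LieSubmodule.toSubmodule (C k))) ≤ m - 1 - k := by
      intro k hk1
      induction k with
      | zero => omega
      | succ k ih =>
        intro hk2
        rcases Nat.eq_or_lt_of_le hk1 with h | h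
        · -- k + 1 = 1
          have : k = 0 := by omega
          subst this
          simpa [Nat.sub_sub] using hfr1
        · have h1 : 1 ≤ k := by omega
          have h2 : k ≤ m - 1 := by omega
          have h3 := ih h1 h2
          have h4 := hfr_lt k (by omega)
          omega
    intro k hk1 hk2
    rcases Nat.lt_or_ge k (m - 1) with h | h
    · -- lower bound via hfr_ge at i = m - 2 - k
      have hi : m - 2 - k ≤ m - 3 := by omega
      have := hfr_ge (m - 2 - k) hi
      have heq : m - 2 - (m - 2 - k) = k := by omega
      rw [heq] at this
      have := hub k hk1 hk2
      omega
    · have : k = m - 1 := by omega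
      subst this
      have : (LieSubmodule.toSubmodule (C (m - 1))) = ⊥ := by
        rw [hfil₁]; rfl
      rw [this, finrank_bot]
      omega
  -- choose elements e t ∈ C t \ C (t+1) spanning the successive quotients
  have heex : ∀ t : ℕ, ∃ e : L, 1 ≤ t → t ≤ m - 2 →
      e ∈ C t ∧ e ∉ C (t + 1) ∧ ∀ u ∈ C t, ∃ c : ℝ, u - c • e ∈ C (t + 1) := by
    intro t
    by_cases h1 : 1 ≤ t ∧ t ≤ m - 2
    swap
    · exact ⟨0, fun ha hb => absurd ⟨ha, hb⟩ h1⟩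
    obtain ⟨ht1, ht2⟩ := h1
    obtain ⟨e, he1, he2⟩ := SetLike.exists_of_lt (hltS t (by omega))
    have he1' : e ∈ C t := (LieSubmodule.mem_toSubmodule _).mp he1
    have he2' : e ∉ C (t + 1) := fun h => he2 ((LieSubmodule.mem_toSubmodule _).mpr h)
    refine ⟨e, fun _ _ => ⟨he1', he2', ?_⟩⟩
    have he0 : e ≠ 0 := fun h => he2' (h ▸ (C (t + 1)).zero_mem)
    have hinf : Submodule.span ℝ {e} ⊓ (LieSubmodule.toSubmodule (C (t + 1))) = ⊥ := by
      rw [Submodule.eq_bot_iff]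
      rintro z ⟨hz1, hz2⟩
      obtain ⟨c, rfl⟩ := Submodule.mem_span_singleton.mp hz1
      rcases eq_or_ne c 0 with rfl | hc
      · simp
      · exfalso
        apply he2'
        have : c⁻¹ • (c • e) ∈ C (t + 1) :=
          (C (t + 1)).smul_mem _ ((LieSubmodule.mem_toSubmodule _).mp hz2)
        rwa [smul_smul, inv_mul_cancel₀ hc, one_smul] at this
    have hfr1' : finrank ℝ ((LieSubmodule.toSubmodule (C (t + 1)))) = m - 1 - (t + 1) :=
      hfr (t + 1) (by omega) (by omega)
    have hfrt : finrank ℝ ((LieSubmodule.toSubmodule (C t))) = m - 1 - t := hfr t (by omega) (by omega)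
    have hsupfr : finrank ℝ (Submodule.span ℝ {e} ⊔ (LieSubmodule.toSubmodule (C (t + 1))) : Submodule ℝ L)
        = m - 1 - t := by
      have h := Submodule.finrank_sup_add_finrank_inf_eq (Submodule.span ℝ {e})
        (LieSubmodule.toSubmodule (C (t + 1)))
      rw [hinf, finrank_bot, finrank_span_singleton he0, hfr1'] at h
      omega
    have hle : Submodule.span ℝ {e} ⊔ (LieSubmodule.toSubmodule (C (t + 1))) ≤ (LieSubmodule.toSubmodule (C t)) := by
      refine sup_le ?_ ?_
      · rw [Submodule.span_le, Set.singleton_subset_iff]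
        exact he1
      · exact (LieSubmodule.toSubmodule_le_toSubmodule _ _).mpr (hanti (Nat.le_succ t))
    have hsup : Submodule.span ℝ {e} ⊔ (LieSubmodule.toSubmodule (C (t + 1))) = (LieSubmodule.toSubmodule (C t)) :=
      Submodule.eq_of_le_of_finrank_le hle (by rw [hsupfr, hfrt])
    intro u hu
    have : u ∈ Submodule.span ℝ {e} ⊔ (LieSubmodule.toSubmodule (C (t + 1))) := by
      rw [hsup]
      exact (LieSubmodule.mem_toSubmodule _).mpr hu
    obtain ⟨v, hv, w, hw, hvw⟩ := Submodule.mem_sup.mp this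
    obtain ⟨c, rfl⟩ := Submodule.mem_span_singleton.mp hv
    refine ⟨c, ?_⟩
    have : u - c • e = w := by rw [← hvw]; abel
    rw [this]
    exact (LieSubmodule.mem_toSubmodule _).mp hw
  choose e he using heex
  -- scalar extraction uniqueness
  have hscal : ∀ t, 1 ≤ t → t ≤ m - 2 → ∀ c : ℝ, c • e t ∈ C (t + 1) → c = 0 := by
    intro t ht1 ht2 c hc
    by_contra hc0
    obtain ⟨he1, he2, _⟩ := he t ht1 ht2
    apply he2
    have : c⁻¹ • (c • e t) ∈ C (t + 1) := (C (t + 1)).smul_mem _ hc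
    rwa [smul_smul, inv_mul_cancel₀ hc0, one_smul] at this
  -- existence of "generic" elements
  have hgen : ∀ t, 1 ≤ t → t ≤ m - 3 → ∃ x : L, ⁅x, e t⁆ ∉ C (t + 2) := by
    intro t ht1 ht2
    by_contra hcon
    push_neg at hcon
    obtain ⟨he1, he2, he3⟩ := he t ht1 (by omega)
    have h1 : C (t + 1) ≤ C (t + 2) := by
      rw [hsucc t, LieSubmodule.lie_le_iff]
      intro x _ u hu
      obtain ⟨c, hc⟩ := he3 u hu
      have : ⁅x, u⁆ = c • ⁅x, e t⁆ + ⁅x, u - c • e t⁆ := by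
        simp only [lie_sub, lie_smul]
        abel
      rw [this]
      exact (C (t + 2)).add_mem ((C (t + 2)).smul_mem _ (hcon x))
        (hmem_succ (t + 1) x _ hc)
    exact hne (t + 1) (by omega) (le_antisymm (hanti (by omega)) h1)
  -- the "complex bilinear" product and its J-image
  have hS : ∀ x y : L, J (⁅x, y⁆ - ⁅J x, J y⁆) = ⁅J x, y⁆ + ⁅x, J y⁆ := by
    intro x y
    have h := hInt x y
    have : ⁅x, y⁆ - ⁅J x, J y⁆ = -(J (⁅J x, y⁆ + ⁅x, J y⁆)) := by
      rw [h]; abel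
    rw [this, map_neg, hJ2]
    abel
  -- the one-dimensional top quotient kills J-stable vectors
  have hone : ∀ u : L, u ∈ C (m - 2) → J u ∈ C (m - 2) → u = 0 := by
    intro u hu hJu
    by_contra h0
    have hfrm2 : finrank ℝ ((LieSubmodule.toSubmodule (C (m - 2)))) = 1 := by
      have := hfr (m - 2) (by omega) (by omega)
      omega
    have hspan : Submodule.span ℝ {u} = (LieSubmodule.toSubmodule (C (m - 2))) := by
      refine Submodule.eq_of_le_of_finrank_le ?_ ?_
      · rw [Submodule.span_le, Set.singleton_subset_iff]
        exact (LieSubmodule.mem_toSubmodule _).mpr hu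
      · rw [hfrm2, finrank_span_singleton h0]
    have : J u ∈ Submodule.span ℝ {u} := by
      rw [hspan]
      exact (LieSubmodule.mem_toSubmodule _).mpr hJu
    obtain ⟨c, hc⟩ := Submodule.mem_span_singleton.mp this
    have h1 : (c * c) • u = -u := by
      calc (c * c) • u = c • (c • u) := by rw [smul_smul]
        _ = c • J u := by rw [hc]
        _ = J (c • u) := (map_smul J c u).symm
        _ = J (J u) := by rw [hc]
        _ = -u := hJ2 u
    have h2 : (c * c + 1) • u = 0 := by
      rw [add_smul, one_smul, h1]
      abel
    have h3 : c * c + 1 ≠ 0 := by nlinarith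
    exact h0 (by simpa [h3] using (smul_eq_zero.mp h2))
  -- main chain lemma
  have hchain : ∀ t, 1 ≤ t → t ≤ m - 3 → ∀ u : L,
      u ∈ C t → J u ∈ C t → ¬(u ∈ C (t + 1) ∧ J u ∈ C (t + 1)) →
      ∃ u' : L, u' ∈ C (t + 1) ∧ J u' ∈ C (t + 1) ∧
        ¬(u' ∈ C (t + 2) ∧ J u' ∈ C (t + 2)) := by
    intro t ht1 ht2 u hu hJu hnot
    obtain ⟨x, hx⟩ := hgen t ht1 ht2
    obtain ⟨het1, het2, het3⟩ := he t ht1 (by omega)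
    obtain ⟨het1', het2', het3'⟩ := he (t + 1) (by omega) (by omega)
    obtain ⟨α, hα⟩ := het3 u hu
    obtain ⟨β, hβ⟩ := het3 (J u) hJu
    obtain ⟨a, ha⟩ := het3' ⁅x, e t⁆ (hmem_succ t x _ het1)
    obtain ⟨b, hb⟩ := het3' ⁅J x, e t⁆ (hmem_succ t (J x) _ het1)
    have ha0 : a ≠ 0 := by
      intro h
      subst h
      apply hx
      simpa using ha
    set u' := ⁅x, u⁆ - ⁅J x, J u⁆ with hu'
    have hu'1 : u' ∈ C (t + 1) :=
      (C (t + 1)).sub_mem (hmem_succ t x u hu) (hmem_succ t (J x) (J u) hJu)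
    have hJu'eq : J u' = ⁅J x, u⁆ + ⁅x, J u⁆ := hS x u
    have hJu'1 : J u' ∈ C (t + 1) := by
      rw [hJu'eq]
      exact (C (t + 1)).add_mem (hmem_succ t (J x) u hu) (hmem_succ t x (J u) hJu)
    refine ⟨u', hu'1, hJu'1, ?_⟩
    rintro ⟨hu'2, hJu'2⟩
    -- compute u' modulo C (t+2)
    have key1 : u' - (α * a - β * b) • e (t + 1)
        = α • (⁅x, e t⁆ - a • e (t + 1)) - β • (⁅J x, e t⁆ - b • e (t + 1))
          + ⁅x, u - α • e t⁆ - ⁅J x, J u - β • e t⁆ := by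
      rw [hu']
      simp only [lie_sub, lie_smul]
      module
    have key2 : J u' - (α * b + β * a) • e (t + 1)
        = α • (⁅J x, e t⁆ - b • e (t + 1)) + β • (⁅x, e t⁆ - a • e (t + 1))
          + ⁅J x, u - α • e t⁆ + ⁅x, J u - β • e t⁆ := by
      rw [hJu'eq]
      simp only [lie_sub, lie_smul]
      module
    have hmem1 : u' - (α * a - β * b) • e (t + 1) ∈ C (t + 2) := by
      rw [key1]
      refine (C (t + 2)).sub_mem ((C (t + 2)).add_mem ((C (t + 2)).sub_mem ?_ ?_) ?_) ?_
      · exact (C (t + 2)).smul_mem _ ha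
      · exact (C (t + 2)).smul_mem _ hb
      · exact hmem_succ (t + 1) x _ hα
      · exact hmem_succ (t + 1) (J x) _ hβ
    have hmem2 : J u' - (α * b + β * a) • e (t + 1) ∈ C (t + 2) := by
      rw [key2]
      refine (C (t + 2)).add_mem ((C (t + 2)).add_mem ((C (t + 2)).add_mem ?_ ?_) ?_) ?_
      · exact (C (t + 2)).smul_mem _ hb
      · exact (C (t + 2)).smul_mem _ ha
      · exact hmem_succ (t + 1) (J x) _ hα
      · exact hmem_succ (t + 1) x _ hβ
    have hc1 : (α * a - β * b) • e (t + 1) ∈ C (t + 2) := by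
      have : (α * a - β * b) • e (t + 1) = u' - (u' - (α * a - β * b) • e (t + 1)) := by abel
      rw [this]
      exact (C (t + 2)).sub_mem hu'2 hmem1
    have hc2 : (α * b + β * a) • e (t + 1) ∈ C (t + 2) := by
      have : (α * b + β * a) • e (t + 1) = J u' - (J u' - (α * b + β * a) • e (t + 1)) := by abel
      rw [this]
      exact (C (t + 2)).sub_mem hJu'2 hmem2
    have h1 : α * a - β * b = 0 := hscal (t + 1) (by omega) (by omega) _ hc1
    have h2 : α * b + β * a = 0 := hscal (t + 1) (by omega) (by omega) _ hc2
    have h5 : 0 < a * a + b * b := by nlinarith [mul_self_pos.mpr ha0, mul_self_nonneg b]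
    have h3 : α * (a * a + b * b) = 0 := by linear_combination a * h1 + b * h2
    have h4 : β * (a * a + b * b) = 0 := by linear_combination a * h2 - b * h1
    have hα0 : α = 0 := (mul_eq_zero.mp h3).resolve_right (ne_of_gt h5)
    have hβ0 : β = 0 := (mul_eq_zero.mp h4).resolve_right (ne_of_gt h5)
    apply hnot
    constructor
    · have := hα; rw [hα0, zero_smul, sub_zero] at this; exact this
    · have := hβ; rw [hβ0, zero_smul, sub_zero] at this; exact this
  -- descent: no element can sit exactly at some level ≥ 1
  have hdesc : ∀ k t, 1 ≤ t → t + k = m - 2 → ∀ u : L,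
      u ∈ C t → J u ∈ C t → ¬(u ∈ C (t + 1) ∧ J u ∈ C (t + 1)) → False := by
    intro k
    induction k with
    | zero =>
      intro t ht1 ht2 u hu hJu hnot
      have ht : t = m - 2 := by omega
      subst ht
      have h0 : u = 0 := hone u hu hJu
      subst h0
      exact hnot ⟨(C _).zero_mem, by rw [map_zero]; exact (C _).zero_mem⟩
    | succ k ih =>
      intro t ht1 ht2 u hu hJu hnot
      obtain ⟨u', hu'1, hu'2, hu'3⟩ := hchain t ht1 (by omega) u hu hJu hnot
      exact ih (t + 1) (by omega) (by omega) u' hu'1 hu'2 hu'3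
  -- J as a linear equivalence
  have hJcomp1 : J.comp (-J) = LinearMap.id := by
    ext x
    simp [hJ2]
  have hJcomp2 : (-J).comp J = LinearMap.id := by
    ext x
    simp [hJ2]
  -- membership in the image of C 1 under J
  have hmapmem : ∀ (k : ℕ) (u : L),
      u ∈ Submodule.map J (LieSubmodule.toSubmodule (C k)) ↔ J u ∈ C k := by
    intro k u
    constructor
    · rintro ⟨v, hv, rfl⟩
      rw [hJ2]
      exact (C k).neg_mem ((LieSubmodule.mem_toSubmodule _).mp hv)
    · intro h
      refine ⟨-J u, ?_, ?_⟩
      · exact (LieSubmodule.mem_toSubmodule _).mpr ((C k).neg_mem h)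
      · rw [map_neg, hJ2]; abel
  -- split according to whether E₁ = C¹ ∩ J C¹ is zero
  set E1 : Submodule ℝ L := (LieSubmodule.toSubmodule (C 1)) ⊓ Submodule.map J (LieSubmodule.toSubmodule (C 1))
    with hE1def
  by_cases hE1 : E1 = ⊥
  · -- degenerate case: forces m = 4 and C 1 ≤ C 2
    have hfrC1 : finrank ℝ ((LieSubmodule.toSubmodule (C 1))) = m - 2 := by
      have := hfr 1 le_rfl (by omega)
      omega
    have hfrmap : finrank ℝ (Submodule.map J (LieSubmodule.toSubmodule (C 1))) = m - 2 := by
      have hJe : ∀ p : Submodule ℝ L, finrank ℝ (Submodule.map J p) = finrank ℝ p := by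
        intro p
        let Jeq : L ≃ₗ[ℝ] L := LinearEquiv.ofLinear J (-J) hJcomp1 hJcomp2
        have : Submodule.map J p = Submodule.map (Jeq : L →ₗ[ℝ] L) p := rfl
        rw [this]
        exact LinearEquiv.finrank_map_eq Jeq p
      rw [hJe, hfrC1]
    have hsupfr : finrank ℝ ((LieSubmodule.toSubmodule (C 1)) ⊔ Submodule.map J (LieSubmodule.toSubmodule (C 1)) : Submodule ℝ L)
        = (m - 2) + (m - 2) := by
      have h := Submodule.finrank_sup_add_finrank_inf_eq (LieSubmodule.toSubmodule (C 1))
        (Submodule.map J (LieSubmodule.toSubmodule (C 1)))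
      rw [← hE1def, hE1, finrank_bot, hfrC1, hfrmap] at h
      omega
    have hm_le : (m - 2) + (m - 2) ≤ m := by
      rw [← hsupfr, ← hdim]
      exact Submodule.finrank_le _
    have hm_eq : m = 4 := by omega
    have hsup : (LieSubmodule.toSubmodule (C 1)) ⊔ Submodule.map J (LieSubmodule.toSubmodule (C 1)) = ⊤ :=
      Submodule.eq_top_of_finrank_eq (by rw [hsupfr, hdim]; omega)
    -- star product vanishes
    have hSzero : ∀ x y : L, ⁅x, y⁆ - ⁅J x, J y⁆ = 0 ∧ ⁅J x, y⁆ + ⁅x, J y⁆ = 0 := by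
      intro x y
      have hmem : ⁅x, y⁆ - ⁅J x, J y⁆ ∈ E1 := by
        refine Submodule.mem_inf.mpr ⟨?_, ?_⟩
        · exact (LieSubmodule.mem_toSubmodule _).mpr
            ((C 1).sub_mem (hC1mem x y) (hC1mem (J x) (J y)))
        · rw [hmapmem, hS]
          exact (C 1).add_mem (hC1mem (J x) y) (hC1mem x (J y))
      rw [hE1, Submodule.mem_bot] at hmem
      constructor
      · exact hmem
      · rw [← hS x y, hmem, map_zero]
    -- decomposition of any element
    have hdec : ∀ a : L, ∃ u v : L, u ∈ C 1 ∧ v ∈ C 1 ∧ a = u + J v := by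
      intro a
      have : a ∈ (LieSubmodule.toSubmodule (C 1)) ⊔ Submodule.map J (LieSubmodule.toSubmodule (C 1)) := by
        rw [hsup]; trivial
      obtain ⟨u, hu, w, hw, huw⟩ := Submodule.mem_sup.mp this
      obtain ⟨v, hv, rfl⟩ := hw
      exact ⟨u, v, (LieSubmodule.mem_toSubmodule _).mp hu,
        (LieSubmodule.mem_toSubmodule _).mp hv, huw.symm⟩
    have h12 : C 1 ≤ C 2 := by
      rw [hsucc 0, LieSubmodule.lie_le_iff]
      intro x _ y _
      obtain ⟨u, v, hu, hv, rfl⟩ := hdec x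
      obtain ⟨u', v', hu', hv', rfl⟩ := hdec y
      have expand : ⁅u + J v, u' + J v'⁆
          = ⁅u, u'⁆ + ⁅u, J v'⁆ + ⁅J v, u'⁆ + ⁅J v, J v'⁆ := by
        simp only [lie_add, add_lie]
        abel
      rw [expand]
      refine (C 2).add_mem ((C 2).add_mem ((C 2).add_mem ?_ ?_) ?_) ?_
      · exact hmem_succ 1 u u' hu'
      · -- ⁅u, J v'⁆ = -⁅J v', u⁆ with u ∈ C 1
        rw [← lie_skew]
        exact (C 2).neg_mem (hmem_succ 1 (J v') u hu)
      · exact hmem_succ 1 (J v) u' hu'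
      · -- ⁅J v, J v'⁆ = ⁅v, v'⁆
        have heq : ⁅J v, J v'⁆ = ⁅v, v'⁆ := (sub_eq_zero.mp (hSzero v v').1).symm
        rw [heq]
        exact hmem_succ 1 v v' hv'
    have h23 : C 2 ≤ C 3 := by
      rw [hsucc 1, hsucc 2]
      exact LieSubmodule.mono_lie_right _ h12
    have h3bot : C 3 = ⊥ := by
      have : m - 1 = 3 := by omega
      rw [← this]
      exact hfil₁
    have h2bot : C 2 = ⊥ := le_bot_iff.mp (h3bot ▸ h23)
    have : m - 2 = 2 := by omega
    exact hfil₂ (by rw [this]; exact h2bot)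
  · -- main case: E₁ ≠ ⊥, run the descent
    obtain ⟨y, hyE, hy0⟩ := Submodule.exists_mem_ne_zero_of_ne_bot hE1
    obtain ⟨hy1, hy2⟩ := hyE
    have hy1' : y ∈ C 1 := (LieSubmodule.mem_toSubmodule _).mp hy1
    have hy2' : J y ∈ C 1 := (hmapmem 1 y).mp hy2
    -- find the exact level of y by induction
    have hfind : ∀ s : ℕ, (y ∈ C (s + 1) ∧ J y ∈ C (s + 1)) ∨
        ∃ t, 1 ≤ t ∧ t ≤ s ∧ y ∈ C t ∧ J y ∈ C t ∧
          ¬(y ∈ C (t + 1) ∧ J y ∈ C (t + 1)) := by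
      intro s
      induction s with
      | zero => exact Or.inl ⟨hy1', hy2'⟩
      | succ s ih =>
        rcases ih with h | ⟨t, h1, h2, h3, h4, h5⟩
        · by_cases h2 : y ∈ C (s + 2) ∧ J y ∈ C (s + 2)
          · exact Or.inl h2
          · exact Or.inr ⟨s + 1, by omega, le_rfl, h.1, h.2, h2⟩
        · exact Or.inr ⟨t, h1, by omega, h3, h4, h5⟩
    rcases hfind (m - 3) with h | ⟨t, h1, h2, h3, h4, h5⟩
    · have heq : m - 3 + 1 = m - 2 := by omega
      rw [heq] at h
      exact hy0 (hone y h.1 h.2)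
    · exact hdesc (m - 2 - t) t h1 (by omega) y h3 h4 h5
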